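/- Let β, γ, c ∈ ℝ with γ ≠ 0, c ≠ 0, β·γ ≠ 1. On the open set U = {(x,y,z,p,q) ∈ ℝ⁵ : q ≠ 0 and y ≠ 1/γ}, define the SL(2) Pfaffian system θ₁ = (dy + y dz) − y²(dp − p dz) − (β/q)·((dq + q dz) − q²(dx − x dz)), θ₂ = (p dz − dp) + γ·q·(dx − x dz), θ₃ = 2y(dp − p dz) + (1/q) dq − 2q(dx − x dz), and define Φ : U → ℝ⁵ by Φ(x,y,z,p,q) = (−1/(γq), −c·exp(−z)·(x − p/(γq)), −(1/c)·exp(z)·(y − β), −c·exp(−z)·p, c·γ·q/(2·exp(z)·(y − 1/γ))). On ℝ⁵ with coordinates (X,Y,Z,P,Q), define ω₁ = dY − P dX, ω₂ = dP − Q dX, ω₃ = dZ − F dX, where F(X,Y,Z,P,Q) = Q·Z² + (β·γ/(1 − β·γ))·(Q·Z² − Z/X + 1/(4·Q·X²)). Then for every a ∈ U and every v ∈ ℝ⁵: θ₁(a)(v) = 0 and θ₂(a)(v) = 0 and θ₃(a)(v) = 0 if and only if ω₁(Φ(a))((fderiv ℝ Φ a)(v)) = 0 and ω₂(Φ(a))((fderiv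 ℝ Φ a)(v)) = 0 and ω₃(Φ(a))((fderiv ℝ Φ a)(v)) = 0. (Theorem: the SL(2) Pfaffian system can be brought to the Monge normal form dz = q z² + (βγ/(1−βγ))(√q z − 1/(2√q x))² by an explicit change of coordinates.) -/

import Mathlib

/-!
STATEMENT 10: the SL(2) Pfaffian system {θ₁,θ₂,θ₃} on
U = {q ≠ 0, y ≠ 1/γ} ⊆ ℝ⁵ is brought to the Monge normal form
{dY − P dX, dP − Q dX, dZ − F dX}, F = QZ² + (βγ/(1−βγ))(QZ² − Z/X + 1/(4QX²)),
by the explicit change of coordinates Φ.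
-/

noncomputable section

open Real


section Aux

open ContinuousLinearMap in
theorem HasFDerivAt.inv'' {f : (Fin 5 → ℝ) → ℝ} {f' : (Fin 5 → ℝ) →L[ℝ] ℝ} {a : Fin 5 → ℝ}
    (hf : HasFDerivAt f f' a) (h : f a ≠ 0) :
    HasFDerivAt (fun x => (f x)⁻¹) (-((f a ^ 2)⁻¹ • f')) a := by
  simpa [Function.comp_def] using (hasDerivAt_inv h).comp_hasFDerivAt a hf

end Aux

/-- coordinate differentials on ℝ⁵ -/
def dc (i : Fin 5) : (Fin 5 → ℝ) →L[ℝ] ℝ := ContinuousLinearMap.proj i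

/-- θ₁ = (dy + y dz) − y²(dp − p dz) − (β/q)((dq + q dz) − q²(dx − x dz)) -/
def θ₁ (β : ℝ) : (Fin 5 → ℝ) → ((Fin 5 → ℝ) →L[ℝ] ℝ) :=
  fun a => (dc 1 + a 1 • dc 2) - (a 1)^2 • (dc 3 - a 3 • dc 2)
    - (β / a 4) • ((dc 4 + a 4 • dc 2) - (a 4)^2 • (dc 0 - a 0 • dc 2))

/-- θ₂ = (p dz − dp) + γq(dx − x dz) -/
def θ₂ (γ : ℝ) : (Fin 5 → ℝ) → ((Fin 5 → ℝ) →L[ℝ] ℝ) :=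
  fun a => (a 3 • dc 2 - dc 3) + (γ * a 4) • (dc 0 - a 0 • dc 2)

/-- θ₃ = 2y(dp − p dz) + (1/q)dq − 2q(dx − x dz) -/
def θ₃ : (Fin 5 → ℝ) → ((Fin 5 → ℝ) →L[ℝ] ℝ) :=
  fun a => (2 * a 1) • (dc 3 - a 3 • dc 2) + (1 / a 4) • dc 4
    - (2 * a 4) • (dc 0 - a 0 • dc 2)

/-- the change of coordinates Φ -/
def Φ (β γ c : ℝ) : (Fin 5 → ℝ) → (Fin 5 → ℝ) :=
  fun a => ![-(1/(γ * a 4)),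
             -(c * exp (-(a 2)) * (a 0 - a 3 / (γ * a 4))),
             -((1/c) * exp (a 2) * (a 1 - β)),
             -(c * exp (-(a 2)) * a 3),
             c * γ * a 4 / (2 * exp (a 2) * (a 1 - 1/γ))]

/-- F(X,Y,Z,P,Q) = QZ² + (βγ/(1−βγ))(QZ² − Z/X + 1/(4QX²)) -/
def F (β γ : ℝ) (b : Fin 5 → ℝ) : ℝ :=
  b 4 * (b 2)^2 + (β * γ / (1 - β * γ)) *
    (b 4 * (b 2)^2 - b 2 / b 0 + 1/(4 * b 4 * (b 0)^2))

/-- ω₁ = dY − P dX -/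
def ω₁ : (Fin 5 → ℝ) → ((Fin 5 → ℝ) →L[ℝ] ℝ) := fun b => dc 1 - b 3 • dc 0

/-- ω₂ = dP − Q dX -/
def ω₂ : (Fin 5 → ℝ) → ((Fin 5 → ℝ) →L[ℝ] ℝ) := fun b => dc 3 - b 4 • dc 0

/-- ω₃ = dZ − F dX -/
def ω₃ (β γ : ℝ) : (Fin 5 → ℝ) → ((Fin 5 → ℝ) →L[ℝ] ℝ) :=
  fun b => dc 2 - F β γ b • dc 0

set_option maxHeartbeats 2000000 in
theorem sl2_pfaffian_to_monge_normal_form (β γ c : ℝ)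
    (hγ : γ ≠ 0) (hc : c ≠ 0) (hβγ : β * γ ≠ 1) :
    ∀ a : Fin 5 → ℝ, a 4 ≠ 0 → a 1 ≠ 1/γ → ∀ v : Fin 5 → ℝ,
      (θ₁ β a v = 0 ∧ θ₂ γ a v = 0 ∧ θ₃ a v = 0) ↔
      (ω₁ (Φ β γ c a) (fderiv ℝ (Φ β γ c) a v) = 0 ∧
       ω₂ (Φ β γ c a) (fderiv ℝ (Φ β γ c) a v) = 0 ∧
       ω₃ β γ (Φ β γ c a) (fderiv ℝ (Φ β γ c) a v) = 0) := by
  intro a hq hy' v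
  have he : Real.exp (a 2) ≠ 0 := Real.exp_ne_zero _
  have hq2 : γ * a 4 ≠ 0 := mul_ne_zero hγ hq
  have hyg : a 1 - 1/γ ≠ 0 := sub_ne_zero.mpr hy'
  have hyg' : a 1 - γ⁻¹ ≠ 0 := by simpa [one_div] using hyg
  have h1βγ : 1 - β * γ ≠ 0 := sub_ne_zero.mpr (Ne.symm hβγ)
  have hden4 : 2 * Real.exp (a 2) * (a 1 - γ⁻¹) ≠ 0 :=
    mul_ne_zero (mul_ne_zero two_ne_zero he) hyg'
  have hga : a 1 * γ ≠ 1 := fun h => hy' ((eq_div_iff hγ).mpr h)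
  have hga1 : a 1 * γ - 1 ≠ 0 := sub_ne_zero.mpr hga
  have hga2 : γ * a 1 - 1 ≠ 0 := by rw [mul_comm] at hga1; exact hga1
  have hga3 : 1 - a 1 * γ ≠ 0 := fun h => hga1 (by linarith [sub_eq_zero.mp h])
  have hga4 : 1 - γ * a 1 ≠ 0 := fun h => hga2 (by linarith [sub_eq_zero.mp h])
  have hβγ1 : β * γ - 1 ≠ 0 := sub_ne_zero.mpr hβγ
  have hβγ2 : γ * β - 1 ≠ 0 := by rw [mul_comm] at hβγ1; exact hβγ1
  have hβγ3 : 1 - γ * β ≠ 0 := fun h => hβγ2 (by linarith [sub_eq_zero.mp h])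
  -- component derivatives
  obtain ⟨D0, h0, hv0⟩ : ∃ D : (Fin 5 → ℝ) →L[ℝ] ℝ,
      HasFDerivAt (fun x : Fin 5 → ℝ => -(1/(γ * x 4))) D a ∧
      D v = γ * v 4 / (γ * a 4)^2 := by
    have h := (((hasFDerivAt_apply (𝕜 := ℝ) 4 a).const_mul γ).inv'' hq2).neg
    refine ⟨_, by simpa [one_div, Pi.neg_def] using h, ?_⟩
    simp
    ring
  obtain ⟨D1, h1, hv1⟩ : ∃ D : (Fin 5 → ℝ) →L[ℝ] ℝ,
      HasFDerivAt (fun x : Fin 5 → ℝ =>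
        -(c * Real.exp (-(x 2)) * (x 0 - x 3 / (γ * x 4)))) D a ∧
      D v = c * (a 0 - a 3 / (γ * a 4)) * v 2 / Real.exp (a 2)
        - c * v 0 / Real.exp (a 2) + c * v 3 / (Real.exp (a 2) * (γ * a 4))
        - c * a 3 * γ * v 4 / (Real.exp (a 2) * (γ * a 4)^2) := by
    have h := ((((hasFDerivAt_apply (𝕜 := ℝ) 2 a).neg.exp).const_mul c).mul
      ((hasFDerivAt_apply (𝕜 := ℝ) 0 a).sub
        ((hasFDerivAt_apply (𝕜 := ℝ) 3 a).mul
          (((hasFDerivAt_apply (𝕜 := ℝ) 4 a).const_mul γ).inv'' hq2)))).neg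
    refine ⟨_, by simpa [div_eq_mul_inv, Pi.neg_def, Pi.mul_def, Pi.sub_def] using h, ?_⟩
    simp [Real.exp_neg]
    field_simp
    ring
  obtain ⟨D2, h2, hv2⟩ : ∃ D : (Fin 5 → ℝ) →L[ℝ] ℝ,
      HasFDerivAt (fun x : Fin 5 → ℝ =>
        -((1/c) * Real.exp (x 2) * (x 1 - β))) D a ∧
      D v = -((1/c) * Real.exp (a 2) * ((a 1 - β) * v 2 + v 1)) := by
    have h := ((((hasFDerivAt_apply (𝕜 := ℝ) 2 a).exp).const_mul (1/c)).mul
      ((hasFDerivAt_apply (𝕜 := ℝ) 1 a).sub_const β)).neg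
    refine ⟨_, h, ?_⟩
    simp
    ring
  obtain ⟨D3, h3, hv3⟩ : ∃ D : (Fin 5 → ℝ) →L[ℝ] ℝ,
      HasFDerivAt (fun x : Fin 5 → ℝ => -(c * Real.exp (-(x 2)) * x 3)) D a ∧
      D v = c * a 3 * v 2 / Real.exp (a 2) - c * v 3 / Real.exp (a 2) := by
    have h := ((((hasFDerivAt_apply (𝕜 := ℝ) 2 a).neg.exp).const_mul c).mul
      (hasFDerivAt_apply (𝕜 := ℝ) 3 a)).neg
    refine ⟨_, h, ?_⟩
    simp [Real.exp_neg]
    field_simp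
    ring
  obtain ⟨D4, h4, hv4⟩ : ∃ D : (Fin 5 → ℝ) →L[ℝ] ℝ,
      HasFDerivAt (fun x : Fin 5 → ℝ =>
        c * γ * x 4 / (2 * Real.exp (x 2) * (x 1 - 1/γ))) D a ∧
      D v = c * γ * v 4 / (2 * Real.exp (a 2) * (a 1 - 1/γ))
        - c * γ * a 4 * v 2 / (2 * Real.exp (a 2) * (a 1 - 1/γ))
        - c * γ * a 4 * v 1 / (2 * Real.exp (a 2) * (a 1 - 1/γ)^2) := by
    have h := (((hasFDerivAt_apply (𝕜 := ℝ) 4 a).const_mul (c * γ)).mul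
      (((((hasFDerivAt_apply (𝕜 := ℝ) 2 a).exp).const_mul 2).mul
        ((hasFDerivAt_apply (𝕜 := ℝ) 1 a).sub_const γ⁻¹)).inv'' hden4))
    refine ⟨_, by simpa [div_eq_mul_inv, one_div, Pi.mul_def] using h, ?_⟩
    simp [one_div]
    field_simp
    ring
  have hΦ : HasFDerivAt (Φ β γ c) (ContinuousLinearMap.pi ![D0, D1, D2, D3, D4]) a := by
    apply hasFDerivAt_pi''
    intro i
    fin_cases i <;>
      simp only [ContinuousLinearMap.proj_pi, Φ, Fin.isValue, Matrix.cons_val_zero,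
        Matrix.cons_val_one, Matrix.head_cons, Matrix.cons_val_two, Matrix.tail_cons,
        Matrix.cons_val_three, Matrix.cons_val_four, Matrix.cons_val_fin_one, Fin.mk_one]
    exacts [h0, h1, h2, h3, h4]
  rw [hΦ.fderiv]
  simp only [θ₁, θ₂, θ₃, ω₁, ω₂, ω₃, F, Φ, dc, ContinuousLinearMap.sub_apply,
    ContinuousLinearMap.add_apply, ContinuousLinearMap.smul_apply,
    ContinuousLinearMap.proj_apply, ContinuousLinearMap.pi_apply, smul_eq_mul,
    Fin.isValue, Matrix.cons_val_zero, Matrix.cons_val_one, Matrix.head_cons,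
    Matrix.cons_val_two, Matrix.tail_cons, Matrix.cons_val_three, Matrix.cons_val_four,
    Real.exp_neg, hv0, hv1, hv2, hv3, hv4]
  constructor
  · rintro ⟨t1, t2, t3⟩
    refine ⟨?_, ?_, ?_⟩
    · linear_combination (norm := (field_simp; ring)) (-(c/(Real.exp (a 2) * γ * a 4))) * t2
    · linear_combination (norm := (field_simp; ring))
        (-(c/(Real.exp (a 2) * γ * (a 1 - 1/γ)))) * t2
        - (c/(2 * Real.exp (a 2) * (a 1 - 1/γ))) * t3
    · linear_combination (norm := (field_simp; ring)) (-(Real.exp (a 2)/c)) * t1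
        + (-(Real.exp (a 2)/c)) * (a 1 * (a 1 - β)/(γ * (a 1 - 1/γ))) * t2
        + (-(Real.exp (a 2)/c)) * (((a 1)^2 - β/γ)/(2 * (a 1 - 1/γ))) * t3
  · rintro ⟨g1, g2, g3⟩
    have T2 : (a 3 * v 2 - v 3) + γ * a 4 * (v 0 - a 0 * v 2) = 0 := by
      linear_combination (norm := (field_simp; ring)) (-(Real.exp (a 2) * γ * a 4 / c)) * g1
    have T3 : 2 * a 1 * (v 3 - a 3 * v 2) + 1 / a 4 * v 4 - 2 * a 4 * (v 0 - a 0 * v 2) = 0 := by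
      linear_combination (norm := (field_simp; ring))
        (-(2 * (a 1 - 1/γ) * Real.exp (a 2) / c)) * g2 + (2 * Real.exp (a 2) * a 4 / c) * g1
    refine ⟨?_, by linear_combination T2, by linear_combination T3⟩
    linear_combination (norm := (field_simp; ring)) (-(c/Real.exp (a 2))) * g3
      + (((a 1)^2 - β/γ) * Real.exp (a 2) / c) * g2
      - (β * a 4 * Real.exp (a 2) / c) * g1


end
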